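/- Let ℒ be a ccs class of countable scattered linear orders. Then there is a map from the set of open intervals of ℝ into countable linear orders which is an embedding of (Int(ℝ), ⊆) into the quasi-order ⊴^ℒ, i.e., (x,y) ⊆ (x',y') if and only if the image of (x,y) is ⊴^ℒ-below the image of (x',y'). Consequently ⊴^ℒ on countable linear orders has chains of order type (ℝ,<) and antichains of size continuum. -/

import Mathlib

universe u v w x

/-- A `K`-convex partition of `L`: a partition of `L` into nonempty pieces indexed by `K`
such that `k < k'` iff every element of `P k` is below every element of `P k'`. -/
def IsConvexPartition {K : Type u} {L : Type v} [LinearOrder K] [LinearOrder L]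
    (P : K → Set L) : Prop :=
  (∀ k, (P k).Nonempty) ∧ (∀ y : L, ∃! k, y ∈ P k) ∧
    ∀ k k' : K, k < k' ↔ ∀ a ∈ P k, ∀ b ∈ P k', a < b

/-- `ℒ`-convex embeddability: `L ⊴^ℒ L'` iff there are `K ∈ ℒ`, a `K`-convex partition of `L`,
and an order embedding of `L` into `L'` mapping each piece onto a convex set. -/
def LCE (ℒ : Set LinOrd.{u}) (L : Type v) (L' : Type w)
    [LinearOrder L] [LinearOrder L'] : Prop :=
  ∃ K ∈ ℒ, ∃ P : ↥K → Set L, IsConvexPartition P ∧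
    ∃ f : L ↪o L', ∀ k : ↥K, (⇑f '' P k).OrdConnected

/-- `ℒ` is closed under convex sums (ccs). -/
def CCS (ℒ : Set LinOrd.{u}) : Prop :=
  ∀ K ∈ ℒ, ∀ K' ∈ ℒ, ∀ P : ↥K → Set ↥K',
    (∀ k, (P k).Nonempty) → (∀ k, (P k).OrdConnected) →
    (∀ k₀ k₁ : ↥K, k₀ < k₁ → ∀ a ∈ P k₀, ∀ b ∈ P k₁, a ≤ b) →
    ∃ M ∈ ℒ, Nonempty (Lex ((k : ↥K) × ↥(P k)) ≃o ↥M)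

open Set
namespace S15

noncomputable def nn (q : ℚ) : ℕ := Denumerable.eqv ℚ q + 1
lemma nn_pos (q : ℚ) : 0 < nn q := Nat.succ_pos _
lemma nn_inj {q q' : ℚ} (h : nn q = nn q') : q = q' :=
  (Denumerable.eqv ℚ).injective (Nat.succ_injective h)

def S (a b : ℝ) : Set (ℚ ×ₗ ℕ) :=
  {p | a < ((ofLex p).1 : ℝ) ∧ ((ofLex p).1 : ℝ) < b ∧ (ofLex p).2 < nn (ofLex p).1}

lemma lex_le {p q : ℚ ×ₗ ℕ} :
    p ≤ q ↔ (ofLex p).1 < (ofLex q).1 ∨ ((ofLex p).1 = (ofLex q).1 ∧ (ofLex p).2 ≤ (ofLex q).2) :=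
  Prod.Lex.le_iff

lemma lex_lt {p q : ℚ ×ₗ ℕ} :
    p < q ↔ (ofLex p).1 < (ofLex q).1 ∨ ((ofLex p).1 = (ofLex q).1 ∧ (ofLex p).2 < (ofLex q).2) :=
  Prod.Lex.lt_iff

lemma mem_S {a b : ℝ} {q : ℚ} {i : ℕ} :
    toLex (q, i) ∈ S a b ↔ a < (q:ℝ) ∧ (q:ℝ) < b ∧ i < nn q := Iff.rfl

lemma eta_lex (p : ℚ ×ₗ ℕ) : toLex ((ofLex p).1, (ofLex p).2) = p := rfl

lemma exists_const {K : Type*} [LinearOrder K] (hK : ¬ Nonempty (ℚ ↪o K))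
    (h : ℚ → K) (c d : ℚ) (hcd : c < d)
    (hmono : ∀ u v : ℚ, c < u → u ≤ v → v < d → h u ≤ h v) :
    ∃ u v : ℚ, c < u ∧ u < v ∧ v < d ∧
      ∀ p p', u < p → p < v → u < p' → p' < v → h p = h p' := by
  by_contra hcon
  push_neg at hcon
  -- H: in every subinterval there is a strictly increasing pair
  have H : ∀ u v : ℚ, c < u → u < v → v < d →
      ∃ p p' : ℚ, u < p ∧ p < p' ∧ p' < v ∧ h p < h p' := by
    intro u v hu huv hv
    obtain ⟨p, p', hp1, hp2, hp3, hp4, hne⟩ := hcon u v hu huv hv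
    rcases lt_trichotomy p p' with hlt | heq | hgt
    · refine ⟨p, p', hp1, hlt, hp4, ?_⟩
      exact lt_of_le_of_ne (hmono p p' (hu.trans hp1) hlt.le (hp4.trans hv)) hne
    · exact absurd (heq ▸ rfl) hne
    · refine ⟨p', p, hp3, hgt, hp2, ?_⟩
      exact lt_of_le_of_ne (hmono p' p (hu.trans hp3) hgt.le (hp2.trans hv))
        (fun e => hne e.symm)
  -- the set of achieved values on the open interval (c,d)
  set D : Set ℚ := {q : ℚ | c < q ∧ q < d} with hD
  set R : Set K := h '' D with hR
  have memD : ∀ {q : ℚ}, c < q → q < d → q ∈ D := fun h1 h2 => ⟨h1, h2⟩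
  have mid_mem : ∀ {u v : ℚ}, c < u → u < v → v < d → (u+v)/2 ∈ D := by
    intro u v h1 h2 h3
    exact ⟨h1.trans (by linarith), (by linarith : (u+v)/2 < v).trans h3⟩
  have hmono' : ∀ {p q : ℚ}, p ∈ D → q ∈ D → p ≤ q → h p ≤ h q :=
    fun hp hq hpq => hmono _ _ hp.1 hpq hq.2
  have lt_of_lt : ∀ {p q : ℚ}, p ∈ D → q ∈ D → h p < h q → p < q := by
    intro p q hp hq hlt
    by_contra hle
    exact absurd (hmono' hq hp (not_lt.mp hle)) (not_le.mpr hlt)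
  haveI : Countable ↥R := (Set.to_countable D).image h |>.to_subtype
  haveI : Nonempty ↥R :=
    ⟨⟨h ((c+d)/2), mem_image_of_mem h ⟨by linarith, by linarith⟩⟩⟩
  -- key step towards density: from x < y in R, find a strictly intermediate value
  have dense : ∀ x y : ↥R, x < y → ∃ z : ↥R, x < z ∧ z < y := by
    rintro ⟨x, qx, hqx, rfl⟩ ⟨y, qy, hqy, rfl⟩ hxy
    have hxy' : h qx < h qy := hxy
    have hqq : qx < qy := lt_of_lt hqx hqy hxy'
    set m : ℚ := (qx + qy)/2 with hm
    have hm1 : qx < m := by rw [hm]; linarith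
    have hm2 : m < qy := by rw [hm]; linarith
    have hmD : m ∈ D := ⟨hqx.1.trans hm1, hm2.trans hqy.2⟩
    have use : ∀ r : ℚ, r ∈ D → h qx < h r → h r < h qy →
        ∃ z : ↥R, (⟨h qx, qx, hqx, rfl⟩ : ↥R) < z ∧ z < ⟨h qy, qy, hqy, rfl⟩ :=
      fun r hr h1 h2 => ⟨⟨h r, r, hr, rfl⟩, h1, h2⟩
    rcases (hmono' hqx hmD hm1.le).lt_or_eq with hq1 | hq1
    · rcases (hmono' hmD hqy hm2.le).lt_or_eq with hq2 | hq2
      · exact use m hmD hq1 hq2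
      · -- h m = h qy : work in (qx, m)
        obtain ⟨p, p', h1, h2, h3, h4⟩ := H qx m hqx.1 hm1 (hm2.trans hqy.2)
        have hpD : p ∈ D := ⟨hqx.1.trans h1, ((h2.trans h3).trans hm2).trans hqy.2⟩
        have hp'D : p' ∈ D := ⟨hpD.1.trans h2, (h3.trans hm2).trans hqy.2⟩
        have hp'm : h p' ≤ h qy := hq2 ▸ hmono' hp'D hmD h3.le
        have hqp : h qx ≤ h p := hmono' hqx hpD h1.le
        rcases hqp.lt_or_eq with h5 | h5
        · exact use p hpD h5 (lt_of_lt_of_le h4 hp'm)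
        · rcases hp'm.lt_or_eq with h6 | h6
          · exact use p' hp'D (h5 ▸ h4) h6
          · -- h p = h qx, h p' = h qy : (p', m) is a gap, contradiction with H
            exfalso
            obtain ⟨s, s', g1, g2, g3, g4⟩ := H p' m hp'D.1 h3 (hm2.trans hqy.2)
            have hsD : s ∈ D := ⟨hp'D.1.trans g1, ((g2.trans g3).trans hm2).trans hqy.2⟩
            have hs'D : s' ∈ D := ⟨hsD.1.trans g2, (g3.trans hm2).trans hqy.2⟩
            have : h s' ≤ h s := by
              calc h s' ≤ h m := hmono' hs'D hmD g3.le
              _ = h qy := hq2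
              _ = h p' := h6.symm
              _ ≤ h s := hmono' hp'D hsD g1.le
            exact absurd g4 (not_lt.mpr this)
    · -- h qx = h m : work in (m, qy)
      obtain ⟨p, p', h1, h2, h3, h4⟩ := H m qy hmD.1 hm2 hqy.2
      have hpD : p ∈ D := ⟨hmD.1.trans h1, ((h2.trans h3)).trans hqy.2⟩
      have hp'D : p' ∈ D := ⟨hpD.1.trans h2, h3.trans hqy.2⟩
      have hmp : h qx ≤ h p := hq1 ▸ hmono' hmD hpD h1.le
      have hp'y : h p' ≤ h qy := hmono' hp'D hqy h3.le
      rcases hp'y.lt_or_eq with h5 | h5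
      · exact use p' hp'D (lt_of_le_of_lt hmp h4) h5
      · rcases hmp.lt_or_eq with h6 | h6
        · exact use p hpD h6 (h4.trans_le hp'y)
        · exfalso
          obtain ⟨s, s', g1, g2, g3, g4⟩ := H m p hmD.1 h1 (h2.trans hp'D.2)
          have hsD : s ∈ D := ⟨hmD.1.trans g1, ((g2.trans g3).trans h2).trans hp'D.2⟩
          have hs'D : s' ∈ D := ⟨hsD.1.trans g2, (g3.trans h2).trans hp'D.2⟩
          have : h s' ≤ h s := by
            calc h s' ≤ h p := hmono' hs'D hpD g3.le
            _ = h qx := h6.symm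
            _ = h m := hq1
            _ ≤ h s := hmono' hmD hsD g1.le
          exact absurd g4 (not_lt.mpr this)
  haveI : DenselyOrdered ↥R := ⟨dense⟩
  haveI : NoMaxOrder ↥R := by
    constructor
    rintro ⟨x, qx, hqx, rfl⟩
    set m : ℚ := (qx + d)/2 with hm
    have hm1 : qx < m := by rw [hm]; linarith [hqx.2]
    have hm2 : m < d := by rw [hm]; linarith [hqx.2]
    obtain ⟨p, p', h1, h2, h3, h4⟩ := H qx m hqx.1 hm1 hm2
    have hp'D : p' ∈ D := ⟨hqx.1.trans (h1.trans h2), h3.trans hm2⟩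
    have hpD : p ∈ D := ⟨hqx.1.trans h1, h2.trans hp'D.2⟩
    exact ⟨⟨h p', p', hp'D, rfl⟩, Subtype.mk_lt_mk.mpr (lt_of_le_of_lt (hmono' hqx hpD h1.le) h4)⟩
  haveI : NoMinOrder ↥R := by
    constructor
    rintro ⟨x, qx, hqx, rfl⟩
    set m : ℚ := (c + qx)/2 with hm
    have hm1 : c < m := by rw [hm]; linarith [hqx.1]
    have hm2 : m < qx := by rw [hm]; linarith [hqx.1]
    obtain ⟨p, p', h1, h2, h3, h4⟩ := H m qx hm1 hm2 hqx.2
    have hpD : p ∈ D := ⟨hm1.trans h1, (h2.trans h3).trans hqx.2⟩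
    have hp'D : p' ∈ D := ⟨hpD.1.trans h2, h3.trans hqx.2⟩
    exact ⟨⟨h p, p, hpD, rfl⟩, Subtype.mk_lt_mk.mpr (lt_of_lt_of_le h4 (hmono' hp'D hqx h3.le))⟩
  obtain ⟨e⟩ := Order.iso_of_countable_dense ℚ ↥R
  exact hK ⟨e.toOrderEmbedding.trans (OrderEmbedding.subtype _)⟩
lemma chunk {a b a' b' : ℝ} {T : Set ↥(S a b)}
    (g : ↥(S a b) ↪o ↥(S a' b')) (hT : (⇑g '' T).OrdConnected)
    {u v : ℚ} (hu : a < (u:ℝ)) (hv : (v:ℝ) < b)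
    (hsub : ∀ x : ↥(S a b), u < (ofLex x.val).1 → (ofLex x.val).1 < v → x ∈ T)
    {q : ℚ} (hq1 : u < q) (hq2 : q < v) : a' < (q:ℝ) ∧ (q:ℝ) < b' := by
  classical
  have memL : ∀ (r : ℚ), u < r → r < v → ∀ i, i < nn r → toLex (r, i) ∈ S a b := by
    intro r h1 h2 i hi
    exact ⟨hu.trans (by exact_mod_cast h1), lt_trans (by exact_mod_cast h2) hv, hi⟩
  have y0 : ↥(S a b) := ⟨toLex (q, 0), memL q hq1 hq2 0 (nn_pos q)⟩
  set X : ℚ → ℕ → ↥(S a b) := fun r i =>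
    if h : toLex (r, i) ∈ S a b then ⟨toLex (r, i), h⟩ else y0 with hX
  have Xval : ∀ (r : ℚ), u < r → r < v → ∀ i, i < nn r → (X r i).val = toLex (r, i) := by
    intro r h1 h2 i hi
    rw [hX]; simp only [dif_pos (memL r h1 h2 i hi)]
  have XT : ∀ (r : ℚ), u < r → r < v → ∀ i, i < nn r → X r i ∈ T := by
    intro r h1 h2 i hi
    apply hsub <;> rw [Xval r h1 h2 i hi] <;> simp only [ofLex_toLex]
    · exact h1
    · exact h2
  have Xlt : ∀ {r r' : ℚ} {i i' : ℕ}, u < r → r < v → u < r' → r' < v →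
      ∀ (hi : i < nn r) (hi' : i' < nn r'),
      (r < r' ∨ (r = r' ∧ i < i')) → X r i < X r' i' := by
    intro r r' i i' h1 h2 h1' h2' hi hi' hcase
    have h := lex_lt (p := toLex (r, i)) (q := toLex (r', i')) |>.mpr (by
      simpa only [ofLex_toLex] using hcase)
    rw [← Xval r h1 h2 i hi, ← Xval r' h1' h2' i' hi'] at h
    exact Subtype.coe_lt_coe.mp h
  set Γ : ℚ → ℚ := fun r => (ofLex (g (X r 0)).val).1 with hΓ
  -- Claim A: the image of a block-start is a block-start
  have claimA : ∀ (r : ℚ), u < r → r < v → (g (X r 0)).val = toLex (Γ r, 0) := by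
    intro r h1 h2
    set Y := g (X r 0) with hY
    set j := (ofLex Y.val).2 with hj
    suffices hj0 : j = 0 by
      rw [hΓ]; rw [← eta_lex Y.val, ← hj, hj0]
    by_contra hjne
    have hYmem := Y.2
    have hz : toLex (Γ r, j - 1) ∈ S a' b' := by
      refine ⟨hYmem.1, hYmem.2.1, ?_⟩
      simp only [ofLex_toLex]
      have h5 := hYmem.2.2
      have h6 : nn (Γ r) = nn ((ofLex Y.val).1) := rfl
      omega
    set z : ↥(S a' b') := ⟨toLex (Γ r, j - 1), hz⟩ with hzdef
    have hzval : (ofLex z.val) = (Γ r, j - 1) := rfl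
    have hp1 : u < (u + r)/2 := by linarith
    have hp2 : (u + r)/2 < r := by linarith
    set p := (u + r)/2
    have hXp : X p 0 < X r 0 :=
      Xlt hp1 (hp2.trans h2) h1 h2 (nn_pos p) (nn_pos r) (Or.inl hp2)
    have hglt : g (X p 0) < Y := g.lt_iff_lt.mpr hXp
    have hgle : g (X p 0) ≤ z := by
      have h := lex_lt.mp (Subtype.coe_lt_coe.mpr hglt)
      apply Subtype.coe_le_coe.mp
      apply lex_le.mpr
      rw [hzval]
      rcases h with hc | hc
      · exact Or.inl hc
      · exact Or.inr ⟨hc.1, by omega⟩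
    have hzY : z < Y := by
      apply Subtype.coe_lt_coe.mp
      apply lex_lt.mpr
      rw [hzval]
      exact Or.inr ⟨rfl, Nat.pred_lt hjne⟩
    obtain ⟨w, hwT, hwz⟩ := hT.out
      (mem_image_of_mem _ (XT p hp1 (hp2.trans h2) 0 (nn_pos p)))
      (mem_image_of_mem _ (XT r h1 h2 0 (nn_pos r)))
      ⟨hgle, hzY.le⟩
    have hwX : w < X r 0 := g.lt_iff_lt.mp (hwz ▸ hzY)
    set s := (ofLex w.val).1 with hs
    have hsr : s < r := by
      have hc := lex_lt.mp (Subtype.coe_lt_coe.mpr hwX)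
      rw [Xval r h1 h2 0 (nn_pos r)] at hc
      simp only [ofLex_toLex] at hc
      rcases hc with hc | hc
      · exact hc
      · omega
    have hmaxr : max s u < r := max_lt hsr h1
    set p'' := (max s u + r)/2 with hp''def
    have hup'' : u < p'' := by
      have h3 := le_max_right s u
      rw [hp''def]; linarith
    have hsp'' : s < p'' := by
      have h3 := le_max_left s u
      rw [hp''def]; linarith
    have hp''r : p'' < r := by rw [hp''def]; linarith
    have hw_lt : w < X p'' 0 := by
      apply Subtype.coe_lt_coe.mp
      rw [Xval p'' hup'' (hp''r.trans h2) 0 (nn_pos p'')]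
      apply lex_lt.mpr
      simp only [ofLex_toLex]
      exact Or.inl hsp''
    have hz_lt : z < g (X p'' 0) := hwz ▸ g.lt_iff_lt.mpr hw_lt
    have hlt_Y : g (X p'' 0) < Y := g.lt_iff_lt.mpr (Xlt hup'' (hp''r.trans h2) h1 h2
      (nn_pos p'') (nn_pos r) (Or.inl hp''r))
    have hc1 := lex_lt.mp (Subtype.coe_lt_coe.mpr hz_lt)
    have hc2 := lex_lt.mp (Subtype.coe_lt_coe.mpr hlt_Y)
    rw [hzval] at hc1
    have hYΓ : (ofLex Y.val).1 = Γ r := rfl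
    rw [hYΓ] at hc2
    dsimp only at hc1
    rcases hc1 with hc1 | hc1 <;> rcases hc2 with hc2 | hc2
    · exact lt_asymm hc1 hc2
    · rw [hc2.1] at hc1; exact lt_irrefl _ hc1
    · rw [← hc1.1] at hc2; exact lt_irrefl _ hc2
    · have e1 := hc1.2
      have e2 := hc2.2

      omega
  -- Claim B: blocks map to blocks, elementwise
  have claimB : ∀ (i : ℕ) (r : ℚ), u < r → r < v → i < nn r →
      (g (X r i)).val = toLex (Γ r, i) := by
    intro i
    induction i with
    | zero => exact fun r h1 h2 _ => claimA r h1 h2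
    | succ i ih =>
      intro r h1 h2 hi
      have hi' : i < nn r := Nat.lt_of_succ_lt hi
      have hgi := ih r h1 h2 hi'
      have hmem : toLex (Γ r, i) ∈ S a' b' := hgi ▸ (g (X r i)).2
      obtain ⟨hm1, hm2, hm3⟩ := hmem
      simp only [ofLex_toLex] at hm1 hm2 hm3
      set Y := g (X r (i+1)) with hYdef
      have hXlt : X r i < X r (i+1) :=
        Xlt h1 h2 h1 h2 hi' hi (Or.inr ⟨rfl, Nat.lt_succ_self i⟩)
      have hltY : toLex (Γ r, i) < Y.val := by
        rw [← hgi]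
        exact Subtype.coe_lt_coe.mpr (g.lt_iff_lt.mpr hXlt)
      have nob : ∀ z : ↥(S a' b'), toLex (Γ r, i) < z.val → z.val < Y.val → False := by
        intro z hz1 hz2
        rw [← hgi] at hz1
        have hz1' : g (X r i) < z := Subtype.coe_lt_coe.mp hz1
        have hz2' : z < Y := Subtype.coe_lt_coe.mp hz2
        obtain ⟨w, hwT, hwz⟩ := hT.out
          (mem_image_of_mem _ (XT r h1 h2 i hi'))
          (mem_image_of_mem _ (XT r h1 h2 (i+1) hi))
          ⟨hz1'.le, hz2'.le⟩
        have hw1 : X r i < w := g.lt_iff_lt.mp (hwz ▸ hz1')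
        have hw2 : w < X r (i+1) := g.lt_iff_lt.mp (hwz ▸ hz2')
        have c1 := lex_lt.mp (Subtype.coe_lt_coe.mpr hw1)
        have c2 := lex_lt.mp (Subtype.coe_lt_coe.mpr hw2)
        rw [Xval r h1 h2 i hi'] at c1
        rw [Xval r h1 h2 (i+1) hi] at c2
        simp only [ofLex_toLex] at c1 c2
        rcases c1 with c1 | c1 <;> rcases c2 with c2 | c2
        · exact lt_asymm c1 c2
        · rw [c2.1] at c1; exact lt_irrefl _ c1
        · rw [c1.1] at c2; exact lt_irrefl _ c2
        · have e1 := c1.2; have e2 := c2.2; omega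
      have hYmem := Y.2
      rcases lex_lt.mp hltY with hc | hc
      · exfalso
        simp only [ofLex_toLex] at hc
        set α := (ofLex Y.val).1 with hα
        set wq : ℚ := (Γ r + α)/2 with hwq
        have hw1 : Γ r < wq := by rw [hwq]; linarith
        have hw2 : wq < α := by rw [hwq]; linarith
        have hzS : toLex (wq, 0) ∈ S a' b' := by
          refine ⟨?_, ?_, nn_pos wq⟩
          · simp only [ofLex_toLex]
            exact hm1.trans (by exact_mod_cast hw1)
          · simp only [ofLex_toLex]
            exact lt_trans (by exact_mod_cast hw2) hYmem.2.1
        refine nob ⟨toLex (wq, 0), hzS⟩ ?_ ?_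
        · exact lex_lt.mpr (Or.inl (by simpa only [ofLex_toLex] using hw1))
        · exact lex_lt.mpr (Or.inl (by simpa only [ofLex_toLex] using hw2))
      · simp only [ofLex_toLex] at hc
        obtain ⟨hc1, hc2⟩ := hc
        have hβ : (ofLex Y.val).2 = i + 1 := by
          by_contra hne
          have hgt : i + 1 < (ofLex Y.val).2 := by omega
          have hzS : toLex (Γ r, i+1) ∈ S a' b' := by
            refine ⟨by simpa only [ofLex_toLex] using hm1, by simpa only [ofLex_toLex] using hm2, ?_⟩
            simp only [ofLex_toLex]
            have h5 := hYmem.2.2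
            rw [← hc1] at h5
            omega
          refine nob ⟨toLex (Γ r, i+1), hzS⟩ ?_ ?_
          · exact lex_lt.mpr (Or.inr ⟨rfl, by simp only [ofLex_toLex]; omega⟩)
          · refine lex_lt.mpr (Or.inr ⟨?_, ?_⟩)
            · simpa only [ofLex_toLex] using hc1
            · simpa only [ofLex_toLex] using hgt
        rw [← eta_lex Y.val, ← hc1, hβ]
  -- membership facts about Γ
  have claimM : ∀ (r : ℚ), u < r → r < v → a' < (Γ r : ℝ) ∧ (Γ r : ℝ) < b' := by
    intro r h1 h2
    have h := claimA r h1 h2 ▸ (g (X r 0)).2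
    exact ⟨h.1, h.2.1⟩
  -- Claim C: the label is preserved
  have claimC : ∀ (r : ℚ), u < r → r < v → nn (Γ r) = nn r := by
    intro r h1 h2
    have hN : 0 < nn r := nn_pos r
    have hb := claimB (nn r - 1) r h1 h2 (by omega)
    have hNle : nn r ≤ nn (Γ r) := by
      have h := hb ▸ (g (X r (nn r - 1))).2
      have h' : nn r - 1 < nn (Γ r) := h.2.2
      omega
    by_contra hne
    have hgt : nn r < nn (Γ r) := lt_of_le_of_ne hNle (fun e => hne e.symm)
    set p : ℚ := (r + v)/2 with hpdef
    have hrp : r < p := by rw [hpdef]; linarith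
    have hpv : p < v := by rw [hpdef]; linarith
    have hup : u < p := h1.trans hrp
    have hAp := claimA p hup hpv
    have hXrp : X r (nn r - 1) < X p 0 :=
      Xlt h1 h2 hup hpv (by omega) (nn_pos p) (Or.inl hrp)
    have hΓΓ : Γ r < Γ p := by
      have h := lex_lt.mp (Subtype.coe_lt_coe.mpr (g.lt_iff_lt.mpr hXrp))
      rw [hb, hAp] at h
      simp only [ofLex_toLex] at h
      rcases h with h | h
      · exact h
      · exact absurd h.2 (by omega)
    obtain ⟨hM1, hM2⟩ := claimM r h1 h2
    have hzS : toLex (Γ r, nn r) ∈ S a' b' := ⟨hM1, hM2, (by omega : nn r < nn (Γ r))⟩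
    set z : ↥(S a' b') := ⟨toLex (Γ r, nn r), hzS⟩ with hzdef
    have hz1 : g (X r (nn r - 1)) ≤ z := by
      apply le_of_lt
      apply Subtype.coe_lt_coe.mp
      rw [hb]
      exact lex_lt.mpr (Or.inr ⟨rfl, by show nn r - 1 < nn r; omega⟩)
    have hz2 : z ≤ g (X p 0) := by
      apply le_of_lt
      apply Subtype.coe_lt_coe.mp
      rw [hAp]
      exact lex_lt.mpr (Or.inl (show Γ r < Γ p from hΓΓ))
    obtain ⟨w, hwT, hwz⟩ := hT.out
      (mem_image_of_mem _ (XT r h1 h2 (nn r - 1) (by omega)))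
      (mem_image_of_mem _ (XT p hup hpv 0 (nn_pos p)))
      ⟨hz1, hz2⟩
    have hw1 : X r (nn r - 1) < w := by
      apply g.lt_iff_lt.mp
      rw [hwz]
      apply Subtype.coe_lt_coe.mp
      rw [hb]
      exact lex_lt.mpr (Or.inr ⟨rfl, by show nn r - 1 < nn r; omega⟩)
    have hw2 : w < X p 0 := by
      apply g.lt_iff_lt.mp
      rw [hwz]
      apply Subtype.coe_lt_coe.mp
      rw [hAp]
      exact lex_lt.mpr (Or.inl (show Γ r < Γ p from hΓΓ))
    set s := (ofLex w.val).1 with hsdef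
    set t := (ofLex w.val).2 with htdef
    have htmem : t < nn s := w.2.2.2
    have c1 := lex_lt.mp (Subtype.coe_lt_coe.mpr hw1)
    have c2 := lex_lt.mp (Subtype.coe_lt_coe.mpr hw2)
    rw [Xval r h1 h2 (nn r - 1) (by omega)] at c1
    rw [Xval p hup hpv 0 (nn_pos p)] at c2
    simp only [ofLex_toLex] at c1 c2
    have hrs : r < s := by
      rcases c1 with c1 | c1
      · exact c1
      · exfalso
        have e1 : r = s := c1.1
        have e2 : nn r - 1 < t := c1.2
        have e3 : t < nn r := by rw [← e1] at htmem; exact htmem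
        omega
    have hsp : s < p := by
      rcases c2 with c2 | c2
      · exact c2
      · exact absurd c2.2 (by omega)
    have hus : u < s := h1.trans hrs
    have hsv : s < v := hsp.trans hpv
    have hw_eq : w = X s t := by
      apply Subtype.ext
      rw [Xval s hus hsv t htmem]
      exact (eta_lex w.val).symm
    have hbs := claimB t s hus hsv htmem
    rw [← hw_eq, hwz, hzdef] at hbs
    have hpair : Γ r = Γ s ∧ nn r = t := by
      have := toLex.injective hbs
      exact ⟨(Prod.mk.injEq _ _ _ _ ▸ this).1, (Prod.mk.injEq _ _ _ _ ▸ this).2⟩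
    have hgeq : g (X s 0) = g (X r 0) := by
      apply Subtype.ext
      rw [claimA s hus hsv, claimA r h1 h2, hpair.1]
    have hsr : s = r := by
      have hXeq : X s 0 = X r 0 := g.injective hgeq
      have := congrArg Subtype.val hXeq
      rw [Xval s hus hsv 0 (nn_pos s), Xval r h1 h2 0 (nn_pos r)] at this
      have := toLex.injective this
      exact (Prod.mk.injEq _ _ _ _ ▸ this).1
    rw [hsr] at hrs
    exact lt_irrefl _ hrs
  have hC := claimC q hq1 hq2
  have hΓq : Γ q = q := nn_inj hC
  have hM := claimM q hq1 hq2
  rw [hΓq] at hM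
  exact hM
lemma subset_of_lce {ℒ : Set LinOrd.{0}}
    (hmem : ∀ A ∈ ℒ, Nonempty ↥A ∧ Countable ↥A ∧ ¬ Nonempty (ℚ ↪o ↥A))
    {a b a' b' : ℝ} (hab : a < b)
    (h : LCE ℒ ↥(S a b) ↥(S a' b')) : Ioo a b ⊆ Ioo a' b' := by
  classical
  obtain ⟨K, hK, P, hP, g, hg⟩ := h
  have hscat := (hmem K hK).2.2
  obtain ⟨hnemp, huniq, hord⟩ := hP
  have conv : ∀ (k : ↥K) (x y z : ↥(S a b)), x ∈ P k → z ∈ P k → x ≤ y → y ≤ z → y ∈ P k := by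
    intro k x y z hx hz hxy hyz
    obtain ⟨k', hk', -⟩ := huniq y
    rcases lt_trichotomy k k' with hlt | heq | hlt
    · exact absurd ((hord k k').mp hlt z hz y hk') (not_lt.mpr hyz)
    · rwa [heq]
    · exact absurd ((hord k' k).mp hlt y hk' x hx) (not_lt.mpr hxy)
  set π : ↥(S a b) → ↥K := fun y => (huniq y).choose with hπdef
  have hπ : ∀ y, y ∈ P (π y) := fun y => (huniq y).choose_spec.1
  have πmono : ∀ {x y : ↥(S a b)}, x ≤ y → π x ≤ π y := by
    intro x y hxy
    by_contra hlt
    push_neg at hlt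
    exact absurd ((hord (π y) (π x)).mp hlt y (hπ y) x (hπ x)) (not_lt.mpr hxy)
  obtain ⟨q0, hq01, hq02⟩ := exists_rat_btwn hab
  have y0 : ↥(S a b) := ⟨toLex (q0, 0), ⟨hq01, hq02, nn_pos _⟩⟩
  set E : ℚ → ↥(S a b) := fun q =>
    if h : toLex (q, 0) ∈ S a b then ⟨toLex (q, 0), h⟩ else y0 with hE
  have Eval : ∀ q : ℚ, a < (q:ℝ) → (q:ℝ) < b → (E q).val = toLex (q, 0) := by
    intro q h1 h2
    rw [hE]; simp only [dif_pos (show toLex (q,0) ∈ S a b from ⟨h1, h2, nn_pos q⟩)]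
  set hh : ℚ → ↥K := fun q => π (E q) with hhdef
  have key : ∀ c d : ℚ, a < (c:ℝ) → c < d → (d:ℝ) < b →
      ∃ q : ℚ, c < q ∧ q < d ∧ a' < (q:ℝ) ∧ (q:ℝ) < b' := by
    intro c d hc hcd hd
    have hcR : ∀ {p : ℚ}, c < p → a < (p:ℝ) := fun hp => hc.trans (by exact_mod_cast hp)
    have hdR : ∀ {p : ℚ}, p < d → (p:ℝ) < b := fun hp => lt_trans (by exact_mod_cast hp) hd
    have hmono : ∀ uu vv : ℚ, c < uu → uu ≤ vv → vv < d → hh uu ≤ hh vv := by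
      intro uu vv h1 h2 h3
      apply πmono
      apply Subtype.coe_le_coe.mp
      rw [Eval uu (hcR h1) (hdR (lt_of_le_of_lt h2 h3)), Eval vv (hcR (h1.trans_le h2)) (hdR h3)]
      rcases h2.lt_or_eq with h4 | h4
      · exact le_of_lt (lex_lt.mpr (Or.inl (by simpa only [ofLex_toLex] using h4)))
      · rw [h4]
    obtain ⟨u, v, hu, huv, hvd, hconst⟩ := exists_const hscat hh c d hcd hmono
    set m : ℚ := (u + v)/2 with hm
    have hum : u < m := by rw [hm]; linarith
    have hmv : m < v := by rw [hm]; linarith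
    set k₀ : ↥K := hh m with hk₀
    have hmemP : ∀ p : ℚ, u < p → p < v → E p ∈ P k₀ := by
      intro p h1 h2
      have h4 : hh p = k₀ := hconst p m h1 h2 hum hmv
      have h5 := hπ (E p)
      rwa [show π (E p) = k₀ from h4] at h5
    have hsub : ∀ x : ↥(S a b), u < (ofLex x.val).1 → (ofLex x.val).1 < v → x ∈ P k₀ := by
      intro x hx1 hx2
      set r := (ofLex x.val).1 with hr
      have hxmem := x.2
      have hrv : r < v := hx2
      have hrb : (r:ℝ) < b := hxmem.2.1
      have hra : a < (r:ℝ) := hxmem.1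
      set r' : ℚ := (r + v)/2 with hr'
      have hrr' : r < r' := by rw [hr']; linarith
      have hr'v : r' < v := by rw [hr']; linarith
      have h1 : E r ≤ x := by
        apply Subtype.coe_le_coe.mp
        rw [Eval r hra hrb]
        rw [← eta_lex x.val]
        exact lex_le.mpr (Or.inr ⟨by simp only [ofLex_toLex, hr], by simp only [ofLex_toLex]; omega⟩)
      have h2 : x ≤ E r' := by
        apply Subtype.coe_le_coe.mp
        rw [Eval r' (hcR (hu.trans (hx1.trans hrr')))
          (hdR (hr'v.trans hvd))]
        refine lex_le.mpr (Or.inl ?_)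
        simpa only [ofLex_toLex] using hrr'
      exact conv k₀ (E r) x (E r') (hmemP r hx1 hx2) (hmemP r' (hx1.trans hrr') hr'v) h1 h2
    have hchunk := chunk g (hg k₀) (hcR hu) (hdR hvd) hsub hum hmv
    exact ⟨m, hu.trans hum, hmv.trans hvd, hchunk.1, hchunk.2⟩
  intro x hx
  obtain ⟨hax, hxb⟩ := hx
  constructor
  · obtain ⟨c, hc1, hc2⟩ := exists_rat_btwn hax
    obtain ⟨d, hd1, hd2⟩ := exists_rat_btwn hc2
    obtain ⟨q, hq1, hq2, hq3, hq4⟩ := key c d hc1 (by exact_mod_cast hd1) (hd2.trans hxb)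
    calc a' < (q:ℝ) := hq3
    _ < (d:ℝ) := by exact_mod_cast hq2
    _ < x := hd2
  · obtain ⟨c, hc1, hc2⟩ := exists_rat_btwn hxb
    obtain ⟨d, hd1, hd2⟩ := exists_rat_btwn hc2
    obtain ⟨q, hq1, hq2, hq3, hq4⟩ := key c d (hax.trans hc1) (by exact_mod_cast hd1) hd2
    calc x < (c:ℝ) := hc1
    _ < (q:ℝ) := by exact_mod_cast hq1
    _ < b' := hq4
lemma one_mem {ℒ : Set LinOrd.{0}} (hne : ℒ.Nonempty)
    (hmem : ∀ A ∈ ℒ, Nonempty ↥A ∧ Countable ↥A ∧ ¬ Nonempty (ℚ ↪o ↥A))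
    (hdc : ∀ A ∈ ℒ, ∀ B : LinOrd.{0}, Nonempty ↥B → Countable ↥B →
      Nonempty (↥B ↪o ↥A) → B ∈ ℒ) : LinOrd.of PUnit ∈ ℒ := by
  haveI : Subsingleton ↥(LinOrd.of PUnit) := inferInstanceAs (Subsingleton PUnit)
  haveI : Countable ↥(LinOrd.of PUnit) := inferInstanceAs (Countable PUnit)
  obtain ⟨A, hA⟩ := hne
  obtain ⟨⟨a0⟩, -, -⟩ := hmem A hA
  refine hdc A hA (LinOrd.of PUnit) ⟨PUnit.unit⟩ inferInstance
    ⟨⟨⟨fun _ => a0, fun x y _ => Subsingleton.elim x y⟩, ?_⟩⟩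
  intro x y
  simp only [Function.Embedding.coeFn_mk, le_refl, true_iff]

lemma lce_of_subset {ℒ : Set LinOrd.{0}} (h1 : LinOrd.of PUnit ∈ ℒ)
    {a b a' b' : ℝ} (hab : a < b) (hsub : Ioo a b ⊆ Ioo a' b') :
    LCE ℒ ↥(S a b) ↥(S a' b') := by
  haveI : Subsingleton ↥(LinOrd.of PUnit) := inferInstanceAs (Subsingleton PUnit)
  obtain ⟨q0, hq01, hq02⟩ := exists_rat_btwn hab
  have x0 : ↥(S a b) := ⟨toLex (q0, 0), ⟨hq01, hq02, nn_pos _⟩⟩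
  have hincl : ∀ x : ↥(S a b), x.val ∈ S a' b' := by
    intro x
    obtain ⟨hm1, hm2⟩ := hsub ⟨x.2.1, x.2.2.1⟩
    exact ⟨hm1, hm2, x.2.2.2⟩
  set f : ↥(S a b) ↪o ↥(S a' b') := OrderEmbedding.ofStrictMono
    (fun x => ⟨x.val, hincl x⟩)
    (fun x y h => Subtype.mk_lt_mk.mpr (Subtype.coe_lt_coe.mpr h)) with hf
  refine ⟨LinOrd.of PUnit, h1, fun _ => Set.univ, ⟨fun _ => ⟨x0, trivial⟩, ?_, ?_⟩, f, ?_⟩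
  · exact fun y => ⟨PUnit.unit, trivial, fun k' _ => Subsingleton.elim k' PUnit.unit⟩
  · intro k k'
    constructor
    · exact fun hlt => absurd (Subsingleton.elim k k') (ne_of_lt hlt)
    · intro hall
      exact absurd (hall x0 trivial x0 trivial) (lt_irrefl x0)
  · intro k
    refine ⟨?_⟩
    rintro x ⟨xx, -, rfl⟩ y ⟨yy, -, rfl⟩ z ⟨hz1, hz2⟩
    have hfx : (f xx).val = xx.val := rfl
    have hfy : (f yy).val = yy.val := rfl
    have hza : a < ((ofLex z.val).1 : ℝ) := by
      have h := lex_le.mp (Subtype.coe_le_coe.mpr hz1)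
      rw [hfx] at h
      rcases h with h | h
      · exact xx.2.1.trans (by exact_mod_cast h)
      · exact h.1 ▸ xx.2.1
    have hzb : ((ofLex z.val).1 : ℝ) < b := by
      have h := lex_le.mp (Subtype.coe_le_coe.mpr hz2)
      rw [hfy] at h
      rcases h with h | h
      · exact lt_trans (by exact_mod_cast h) yy.2.2.1
      · exact h.1 ▸ yy.2.2.1
    have hzmem : z.val ∈ S a b := ⟨hza, hzb, z.2.2.2⟩
    exact ⟨⟨z.val, hzmem⟩, trivial, Subtype.ext rfl⟩

end S15


/-- For a ccs class `ℒ` of countable scattered linear orders, `(Int(ℝ), ⊆)` embeds into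
`⊴^ℒ` on countable linear orders; consequently there are chains of order type `(ℝ, <)`
and antichains of size continuum. -/
theorem stmt_15 (ℒ : Set LinOrd.{0}) (hne : ℒ.Nonempty)
    (hmem : ∀ A ∈ ℒ, Nonempty ↥A ∧ Countable ↥A ∧ ¬ Nonempty (ℚ ↪o ↥A))
    (hdc : ∀ A ∈ ℒ, ∀ B : LinOrd.{0}, Nonempty ↥B → Countable ↥B →
      Nonempty (↥B ↪o ↥A) → B ∈ ℒ)
    (hccs : CCS ℒ) :
    (∃ Φ : ℝ → ℝ → LinOrd.{0}, (∀ a b : ℝ, a < b → Countable ↥(Φ a b)) ∧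
        ∀ a b a' b' : ℝ, a < b → a' < b' →
          (Set.Ioo a b ⊆ Set.Ioo a' b' ↔ LCE ℒ ↥(Φ a b) ↥(Φ a' b'))) ∧
      (∃ C : ℝ → LinOrd.{0}, (∀ r, Countable ↥(C r)) ∧
        ∀ r s : ℝ, r < s → LCE ℒ ↥(C r) ↥(C s) ∧ ¬ LCE ℒ ↥(C s) ↥(C r)) ∧
      (∃ A : ℝ → LinOrd.{0}, (∀ r, Countable ↥(A r)) ∧
        ∀ r s : ℝ, r ≠ s → ¬ LCE ℒ ↥(A r) ↥(A s)) := by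
  have h1 : LinOrd.of PUnit ∈ ℒ := S15.one_mem hne hmem hdc
  haveI : Countable (ℚ ×ₗ ℕ) := inferInstanceAs (Countable (ℚ × ℕ))
  haveI hcnt : ∀ a b : ℝ, Countable ↥(S15.S a b) := fun a b => Subtype.countable
  refine ⟨⟨fun a b => LinOrd.of ↥(S15.S a b), fun a b _ => hcnt a b, ?_⟩,
    ⟨fun r => LinOrd.of ↥(S15.S 0 (Real.exp r)), fun r => hcnt _ _, ?_⟩,
    ⟨fun r => LinOrd.of ↥(S15.S r (r+1)), fun r => hcnt _ _, ?_⟩⟩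
  · intro a b a' b' hab hab'
    exact ⟨fun hsub => S15.lce_of_subset h1 hab hsub,
      fun hlce => S15.subset_of_lce hmem hab hlce⟩
  · intro r s hrs
    constructor
    · exact S15.lce_of_subset h1 (Real.exp_pos r)
        (Set.Ioo_subset_Ioo le_rfl (Real.exp_le_exp.mpr hrs.le))
    · intro hlce
      have hsub := S15.subset_of_lce hmem (Real.exp_pos s) hlce
      have := hsub ⟨Real.exp_pos r, Real.exp_lt_exp.mpr hrs⟩
      exact lt_irrefl _ this.2
  · intro r s hrs hlce
    have hsub := S15.subset_of_lce hmem (by linarith : r < r + 1) hlce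
    rw [Set.Ioo_subset_Ioo_iff (by linarith : r < r + 1)] at hsub
    exact hrs (by linarith [hsub.1, hsub.2])
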